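/- Let 0 < t < 2 be real, set z := t/√(1 − t/2), m := (2z)^{−1/2}, Λ := m⁻³, u₃ := −m²·(2t − t²/4) − (3/8)mΛ, and let g₂, g₃ be the equal-mass N_f = 3 Weierstrass invariants and D(u) := g₂(u)³ − 27g₃(u)². Then D′(u₃) = −z·(2+t)⁹·(4−t)³/(1024·t·(2−t)⁴). Consequently, with 𝚖 := 1728·g₂(u₃)³/D′(u₃) and 𝚡 := √(z(2−t)²/((2+t)²·t·(4−t))) (the positive square root), one has −4·𝚖·𝚡⁷ = (1 − t/2)^{3/4}·(1 − t/4)^{−1/2}·(1 + t/2)^{−4}. -/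

import Mathlib

set_option maxHeartbeats 4000000
set_option maxRecDepth 8000

private lemma cubicDeriv (a b c d x : ℝ) :
    HasDerivAt (fun v : ℝ => a + b*v + c*v^2 + d*v^3) (b + 2*c*x + 3*d*x^2) x := by
  have h1 : HasDerivAt (fun v : ℝ => v) 1 x := hasDerivAt_id x
  have h2 : HasDerivAt (fun v : ℝ => v^2) (2*x) x := by simpa using hasDerivAt_pow 2 x
  have h3 : HasDerivAt (fun v : ℝ => v^3) (3*x^2) x := by simpa using hasDerivAt_pow 3 x
  have h := ((hasDerivAt_const x a).add (h1.const_mul b)).add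
      ((h2.const_mul c).add (h3.const_mul d))
  exact (h.congr_deriv (by ring)).congr_of_eventuallyEq
    (Filter.Eventually.of_forall fun v => by simp only [Pi.add_apply]; ring)

theorem stmt_8 (t z m Λ u3 : ℝ) (ht0 : 0 < t) (ht2 : t < 2)
    (hz : z = t / Real.sqrt (1 - t/2))
    (hm : m = 1 / Real.sqrt (2*z))
    (hΛ : Λ = 1 / m^3)
    (hu3 : u3 = -m^2 * (2*t - t^2/4) - (3/8)*m*Λ)
    (g2 g3 D : ℝ → ℝ)
    (hg2 : ∀ v, g2 v = Λ^4/3072 - Λ*m^3 + (1/48)*Λ^2*(9*m^2 - 4*v) + (4/3)*v^2)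
    (hg3 : ∀ v, g3 v = (8/27)*v^3 + (5/144)*Λ^2*v^2
        - Λ*v*(Λ^3 + 768*m^3 + 288*Λ*m^2)/2304
        + Λ^2*(Λ^4 + 165888*m^4 - 4608*Λ*m^3 + 864*Λ^2*m^2)/884736)
    (hD : ∀ v, D v = g2 v ^ 3 - 27 * g3 v ^ 2)
    (mCoef xPer : ℝ)
    (hmCoef : mCoef = 1728 * g2 u3 ^ 3 / deriv D u3)
    (hxPer : xPer = Real.sqrt (z*(2 - t)^2/((2 + t)^2*t*(4 - t)))) :
    deriv D u3 = -z*(2 + t)^9*(4 - t)^3/(1024*t*(2 - t)^4) ∧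
    -4 * mCoef * xPer^7
      = (1 - t/2) ^ ((3:ℝ)/4) * (1 - t/4) ^ (-(1:ℝ)/2) * (1 + t/2) ^ (-(4:ℝ)) := by
  have h2t : (0:ℝ) < 2 - t := by linarith
  have h4t : (0:ℝ) < 4 - t := by linarith
  have h2pt : (0:ℝ) < 2 + t := by linarith
  set s : ℝ := Real.sqrt (1 - t/2) with hsdef
  have hs0 : 0 < s := Real.sqrt_pos.mpr (by linarith)
  have hs2 : s^2 = 1 - t/2 := Real.sq_sqrt (by linarith)
  have hzs : z * s = t := by rw [hz]; field_simp
  have hz0 : 0 < z := by rw [hz]; exact div_pos ht0 hs0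
  have hz2 : z^2*(2-t) = 2*t^2 := by
    linear_combination (-2*z^2)*hs2 + (2*(z*s+t))*hzs
  set p : ℝ := Real.sqrt (2*z) with hpdef
  have hp0 : 0 < p := Real.sqrt_pos.mpr (by linarith)
  have hp2 : p^2 = 2*z := Real.sq_sqrt (by linarith)
  have hΛp : Λ = p^3 := by rw [hΛ, hm]; field_simp
  -- small algebraic relations
  have hL2 : Λ^2 = 8*z^3 := by
    rw [hΛp]; linear_combination (p^4 + 2*z*p^2 + 4*z^2)*hp2
  have hLm1 : Λ*m = 2*z := by
    rw [hΛp, hm]; field_simp; linear_combination hp2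
  have hLm2 : Λ^2*m^2 = 4*z^2 := by
    rw [hΛp, hm]; field_simp; linear_combination (p^2 + 2*z) * hp2
  have hLm3 : Λ*m^3 = 1 := by
    rw [hΛp, hm]; field_simp
  have hzu : z*u3 = (t^2 - 8*t - 6*z^2)/8 := by
    rw [hu3, hΛp, hm]; field_simp; linear_combination (-12*z*p^2 - 4*t^2 + 32*t) * hp2
  -- derivatives
  have hg2fun : g2 = fun v => (Λ^4/3072 - Λ*m^3 + (3/16)*Λ^2*m^2) + (-(1/12)*Λ^2)*v
      + (4/3)*v^2 + 0*v^3 := by funext v; rw [hg2]; ring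
  have hg3fun : g3 = fun v =>
      (Λ^2*(Λ^4 + 165888*m^4 - 4608*Λ*m^3 + 864*Λ^2*m^2)/884736)
      + (-(Λ*(Λ^3 + 768*m^3 + 288*Λ*m^2)/2304))*v + ((5/144)*Λ^2)*v^2 + (8/27)*v^3 := by
    funext v; rw [hg3]; ring
  have hg2d : HasDerivAt g2 ((-(1/12)*Λ^2) + 2*((4:ℝ)/3)*u3 + 3*(0:ℝ)*u3^2) u3 := by
    rw [hg2fun]; exact cubicDeriv _ _ _ _ _
  have hg3d : HasDerivAt g3 ((-(Λ*(Λ^3 + 768*m^3 + 288*Λ*m^2)/2304))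
      + 2*((5/144)*Λ^2)*u3 + 3*((8:ℝ)/27)*u3^2) u3 := by
    rw [hg3fun]; exact cubicDeriv _ _ _ _ _
  have hDfun : D = fun v => g2 v ^ 3 - 27 * g3 v ^ 2 := funext hD
  have hDd : HasDerivAt D
      (3*(g2 u3)^2*((-(1/12)*Λ^2) + 2*((4:ℝ)/3)*u3 + 3*(0:ℝ)*u3^2)
       - 54*(g3 u3)*((-(Λ*(Λ^3 + 768*m^3 + 288*Λ*m^2)/2304))
          + 2*((5/144)*Λ^2)*u3 + 3*((8:ℝ)/27)*u3^2)) u3 := by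
    rw [hDfun]
    exact ((hg2d.pow 3).sub ((hg3d.pow 2).const_mul 27)).congr_deriv (by norm_num; ring)
  -- value lemmas (denominator-cleared)
  have hg2c : g2 u3 * (96*(2-t)^3*z^2) = (2+t)^4*(4-t)^2*z^2 := by
    rw [hg2 u3]; linear_combination ((-768)*z^2 + (1152)*z^2*t + (-576)*z^2*t^2 + (96)*z^2*t^3) * hLm3 + ((144)*z^2 + (-216)*z^2*t + (108)*z^2*t^2 + (-18)*z^2*t^3) * hLm2 + ((-64)*z^2*u3 + (1/4)*z^2*Λ^2 + (96)*z^2*t*u3 + (-3/8)*z^2*t*Λ^2 + (-48)*z^2*t^2*u3 + (3/16)*z^2*t^2*Λ^2 + (8)*z^2*t^3*u3 + (-1/32)*z^2*t^3*Λ^2 + (2)*z^5 + (-3)*z^5*t + (3/2)*z^5*t^2 + (-1/4)*z^5*t^3) * hL2 + ((-1024)*t + (1664)*t^2 + (-960)*t^3 + (224)*t^4 + (-16)*t^5 + (1024)*z*u3 + (-1536)*z*t*u3 + (768)*z*t^2*u3 + (-128)*z*t^3*u3 + (-768)*z^2 + (1152)*z^2*t + (-576)*z^2*t^2 + (96)*z^2*t^3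 + (-512)*z^4 + (768)*z^4*t + (-384)*z^4*t^2 + (64)*z^4*t^3) * hzu + ((-512) + (896)*t + (-584)*t^2 + (172)*t^3 + (-22)*t^4 + (1)*t^5 + (576)*z^2 + (-320)*z^2*t + (48)*z^2*t^2 + (192)*z^4 + (-192)*z^4*t + (56)*z^4*t^2 + (-4)*z^4*t^3 + (8)*z^6 + (-8)*z^6*t + (2)*z^6*t^2) * hz2
  have hg2v : g2 u3 = (2+t)^4*(4-t)^2/(96*(2-t)^3) := by
    rw [eq_div_iff (by positivity)]
    apply mul_left_cancel₀ (pow_ne_zero 2 hz0.ne')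
    linear_combination hg2c
  have hg3c : g3 u3 * (t*(2-t)^4*z^3) = z^4*(16/27 + (4/3)*t + t^2 + (5/36)*t^3
      - (1/6)*t^4 - (1/16)*t^5 + (1/144)*t^6 + (1/192)*t^7 - (1/6912)*t^9) := by
    rw [hg3 u3]; linear_combination ((-16/3)*z^3*t*u3 + (-1/12)*z^3*t*Λ^2 + (3)*z^3*t*m*Λ + (32/3)*z^3*t^2*u3 + (1/6)*z^3*t^2*Λ^2 + (-6)*z^3*t^2*m*Λ + (-8)*z^3*t^3*u3 + (-1/8)*z^3*t^3*Λ^2 + (9/2)*z^3*t^3*m*Λ + (8/3)*z^3*t^4*u3 + (1/24)*z^3*t^4*Λ^2 + (-3/2)*z^3*t^4*m*Λ + (-1/3)*z^3*t^5*u3 + (-1/192)*z^3*t^5*Λ^2 + (3/16)*z^3*t^5*m*Λ) * hLm3 + ((-2)*z^3*t*u3 + (1/64)*z^3*t*Λ^2 + (4)*z^3*t^2*u3 + (-1/32)*z^3*t^2*Λ^2 + (-3)*z^3*t^3*u3 + (3/128)*z^3*t^3*Λ^2 + (1)*z^3*t^4*u3 + (-1/128)*z^3*t^4*Λ^2 +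 (-1/8)*z^3*t^5*u3 + (1/1024)*z^3*t^5*Λ^2) * hLm2 + ((3)*z^3*t + (-6)*z^3*t^2 + (9/2)*z^3*t^3 + (-3/2)*z^3*t^4 + (3/16)*z^3*t^5) * hLm1 + ((-1/12)*z^3*t + (5/9)*z^3*t*u3^2 + (-1/144)*z^3*t*Λ^2*u3 + (1/55296)*z^3*t*Λ^4 + (1/6)*z^3*t^2 + (-10/9)*z^3*t^2*u3^2 + (1/72)*z^3*t^2*Λ^2*u3 + (-1/27648)*z^3*t^2*Λ^4 + (-1/8)*z^3*t^3 + (5/6)*z^3*t^3*u3^2 + (-1/96)*z^3*t^3*Λ^2*u3 + (1/36864)*z^3*t^3*Λ^4 + (1/24)*z^3*t^4 + (-5/18)*z^3*t^4*u3^2 + (1/288)*z^3*t^4*Λ^2*u3 + (-1/110592)*z^3*t^4*Λ^4 + (-1/192)*z^3*t^5 + (5/144)*z^3*t^5*u3^2 + (-1/2304)*z^3*t^5*Λ^2*u3 + (1/884736)*z^3*t^5*Λ^4 + (1/16)*z^5*t + (-1/8)*z^5*t^2 + (3/32)*z^5*t^3 + (-1/32)*z^5*t^4 + (1/256)*z^5*t^5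 + (-1/18)*z^6*t*u3 + (1/6912)*z^6*t*Λ^2 + (1/9)*z^6*t^2*u3 + (-1/3456)*z^6*t^2*Λ^2 + (-1/12)*z^6*t^3*u3 + (1/4608)*z^6*t^3*Λ^2 + (1/36)*z^6*t^4*u3 + (-1/13824)*z^6*t^4*Λ^2 + (-1/288)*z^6*t^5*u3 + (1/110592)*z^6*t^5*Λ^2 + (1/864)*z^9*t + (-1/432)*z^9*t^2 + (1/576)*z^9*t^3 + (-1/1728)*z^9*t^4 + (1/13824)*z^9*t^5) * hL2 + ((128/27)*t^3 + (-32/3)*t^4 + (86/9)*t^5 + (-116/27)*t^6 + (1)*t^7 + (-1/9)*t^8 + (1/216)*t^9 + (-128/27)*z*t^2*u3 + (272/27)*z*t^3*u3 + (-224/27)*z*t^4*u3 + (88/27)*z*t^5*u3 + (-16/27)*z*t^6*u3 + (1/27)*z*t^7*u3 + (-16/3)*z^2*t + (128/27)*z^2*t*u3^2 + (160/9)*z^2*t^2 + (-256/27)*z^2*t^2*u3^2 + (-208/9)*z^2*t^3 + (64/9)*z^2*t^3*u3^2 + (136/9)*z^2*t^4 + (-64/27)*z^2*t^4*u3^2 +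 (-47/9)*z^2*t^5 + (8/27)*z^2*t^5*u3^2 + (8/9)*z^2*t^6 + (-1/18)*z^2*t^7 + (-32/9)*z^3*t*u3 + (64/9)*z^3*t^2*u3 + (-16/3)*z^3*t^3*u3 + (16/9)*z^3*t^4*u3 + (-2/9)*z^3*t^5*u3 + (-16/3)*z^4*t + (56/9)*z^4*t^2 + (13/9)*z^4*t^3 + (-46/9)*z^4*t^4 + (49/18)*z^4*t^5 + (-5/9)*z^4*t^6 + (5/144)*z^4*t^7 + (40/9)*z^5*t*u3 + (-80/9)*z^5*t^2*u3 + (20/3)*z^5*t^3*u3 + (-20/9)*z^5*t^4*u3 + (5/18)*z^5*t^5*u3 + (-10/3)*z^6*t + (20/3)*z^6*t^2 + (-5)*z^6*t^3 + (5/3)*z^6*t^4 + (-5/24)*z^6*t^5 + (-4/9)*z^8*t + (8/9)*z^8*t^2 + (-2/3)*z^8*t^3 + (2/9)*z^8*t^4 + (-1/36)*z^8*t^5) * hzu + ((64/27)*t^2 + (-152/27)*t^3 + (49/9)*t^4 + (-593/216)*t^5 + (83/108)*t^6 + (-17/144)*t^7 + (1/108)*t^8 + (-1/3456)*t^9 +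 (-8/27)*z^2 + (113/27)*z^2*t + (-227/27)*z^2*t^2 + (1537/216)*z^2*t^3 + (-1307/432)*z^2*t^4 + (139/216)*z^2*t^5 + (-49/864)*z^2*t^6 + (1/3456)*z^2*t^7 + (1/6912)*z^2*t^8 + (5/3)*z^4*t + (5/6)*z^4*t^2 + (-8/3)*z^4*t^3 + (59/36)*z^4*t^4 + (-7/16)*z^4*t^5 + (5/96)*z^4*t^6 + (-1/432)*z^4*t^7 + (3/2)*z^6*t + (-73/36)*z^6*t^2 + (67/72)*z^6*t^3 + (-7/48)*z^6*t^4 + (-1/432)*z^6*t^5 + (1/864)*z^6*t^6 + (1/6)*z^8*t + (-1/4)*z^8*t^2 + (7/54)*z^8*t^3 + (-11/432)*z^8*t^4 + (1/864)*z^8*t^5 + (1/216)*z^10*t + (-1/144)*z^10*t^2 + (1/288)*z^10*t^3 + (-1/1728)*z^10*t^4) * hz2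
  have hg3v : g3 u3 = z*(16/27 + (4/3)*t + t^2 + (5/36)*t^3
      - (1/6)*t^4 - (1/16)*t^5 + (1/144)*t^6 + (1/192)*t^7 - (1/6912)*t^9)/(t*(2-t)^4) := by
    rw [eq_div_iff (by positivity)]
    apply mul_left_cancel₀ (pow_ne_zero 3 hz0.ne')
    linear_combination hg3c
  have hAc : ((-(1/12)*Λ^2) + 2*((4:ℝ)/3)*u3 + 3*(0:ℝ)*u3^2) * (t*(2-t)*z)
      = z^2*(-16/3 + 2*t - (7/6)*t^3) := by
    linear_combination ((-1/6)*z*t + (1/12)*z*t^2) * hL2 + ((16/3)*t + (-8/3)*t^2) * hzu + ((8/3) + (-5/3)*t + (1/6)*t^2 + (-2/3)*z^2*t) * hz2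
  have hAv : ((-(1/12)*Λ^2) + 2*((4:ℝ)/3)*u3 + 3*(0:ℝ)*u3^2)
      = z*(-16/3 + 2*t - (7/6)*t^3)/(t*(2-t)) := by
    rw [eq_div_iff (by positivity)]
    apply mul_left_cancel₀ hz0.ne'
    linear_combination hAc
  have hBc : ((-(Λ*(Λ^3 + 768*m^3 + 288*Λ*m^2)/2304))
      + 2*((5/144)*Λ^2)*u3 + 3*((8:ℝ)/27)*u3^2) * ((2-t)^3*z^2)
      = z^2*(40/9 - (4/3)*t - 5*t^2 - (5/9)*t^3 + (5/6)*t^4 - (11/144)*t^6) := by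
    linear_combination ((-8/3)*z^2 + (4)*z^2*t + (-2)*z^2*t^2 + (1/3)*z^2*t^3) * hLm3 + ((-1)*z^2 + (3/2)*z^2*t + (-3/4)*z^2*t^2 + (1/8)*z^2*t^3) * hLm2 + ((5/9)*z^2*u3 + (-1/288)*z^2*Λ^2 + (-5/6)*z^2*t*u3 + (1/192)*z^2*t*Λ^2 + (5/12)*z^2*t^2*u3 + (-1/384)*z^2*t^2*Λ^2 + (-5/72)*z^2*t^3*u3 + (1/2304)*z^2*t^3*Λ^2 + (-1/36)*z^5 + (1/24)*z^5*t + (-1/48)*z^5*t^2 + (1/288)*z^5*t^3) * hL2 + ((-64/9)*t + (104/9)*t^2 + (-20/3)*t^3 + (14/9)*t^4 + (-1/9)*t^5 + (64/9)*z*u3 + (-32/3)*z*t*u3 + (16/3)*z*t^2*u3 + (-8/9)*z*t^3*u3 + (-16/3)*z^2 + (8)*z^2*t + (-4)*z^2*t^2 + (2/3)*z^2*t^3 + (40/9)*z^4 + (-20/3)*z^4*t + (10/3)*z^4*t^2 + (-5/9)*z^4*t^3) * hzu + ((-32/9) + (56/9)*t + (-73/18)*t^2 + (43/36)*t^3 +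 (-11/72)*t^4 + (1/144)*t^5 + (-20/9)*z^2*t + (5/6)*z^2*t^2 + (-1/24)*z^2*t^4 + (-5/3)*z^4 + (5/3)*z^4*t + (-19/36)*z^4*t^2 + (1/18)*z^4*t^3 + (-1/9)*z^6 + (1/9)*z^6*t + (-1/36)*z^6*t^2) * hz2
  have hBv : ((-(Λ*(Λ^3 + 768*m^3 + 288*Λ*m^2)/2304))
      + 2*((5/144)*Λ^2)*u3 + 3*((8:ℝ)/27)*u3^2)
      = (40/9 - (4/3)*t - 5*t^2 - (5/9)*t^3 + (5/6)*t^4 - (11/144)*t^6)/((2-t)^3) := by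
    rw [eq_div_iff (by positivity)]
    apply mul_left_cancel₀ (pow_ne_zero 2 hz0.ne')
    linear_combination hBc
  have hDval : deriv D u3 = -z*(2 + t)^9*(4 - t)^3/(1024*t*(2 - t)^4) := by
    rw [hDd.deriv, hg2v, hg3v, hAv, hBv]
    field_simp
    ring
  refine ⟨hDval, ?_⟩
  set a : ℝ := Real.sqrt z with hadef
  set b : ℝ := Real.sqrt t with hbdef
  set c : ℝ := Real.sqrt (4 - t) with hcdef
  set r : ℝ := Real.sqrt s with hrdef
  set q : ℝ := Real.sqrt (1 - t/4) with hqdef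
  have ha0 : 0 < a := Real.sqrt_pos.mpr hz0
  have hb0 : 0 < b := Real.sqrt_pos.mpr ht0
  have hc0 : 0 < c := Real.sqrt_pos.mpr h4t
  have hr0 : 0 < r := Real.sqrt_pos.mpr hs0
  have hq0 : 0 < q := Real.sqrt_pos.mpr (by linarith)
  have ha2 : a^2 = z := Real.sq_sqrt hz0.le
  have hb2 : b^2 = t := Real.sq_sqrt ht0.le
  have hc2 : c^2 = 4 - t := Real.sq_sqrt h4t.le
  have hr2 : r^2 = s := Real.sq_sqrt hs0.le
  have hq2 : q^2 = 1 - t/4 := Real.sq_sqrt (by linarith)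
  have hab : a * r = b := by
    rw [hadef, hrdef, hbdef, ← Real.sqrt_mul hz0.le, hzs]
  have hcq : c = 2*q := by
    rw [hcdef, hqdef, show (4:ℝ) - t = 4*(1 - t/4) by ring, Real.sqrt_mul (by norm_num),
      show Real.sqrt 4 = 2 by rw [show (4:ℝ) = 2^2 by norm_num, Real.sqrt_sq (by norm_num)]]
  have hr4 : r^4 = 1 - t/2 := by linear_combination (r^2+s)*hr2 + hs2
  have hmC : mCoef = -2*t*(2+t)^3*(4-t)^3/((2-t)^5*z) := by
    rw [hmCoef, hg2v, hDval]
    field_simp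
    ring
  have hx2eq : z*(2 - t)^2/((2 + t)^2*t*(4 - t)) = (a*(2-t)/((2+t)*b*c))^2 := by
    rw [div_pow, div_eq_div_iff (by positivity) (by positivity)]
    linear_combination ((-64)*t + (16)*t^2 + (32)*t^3 + (-8)*t^4 + (-4)*t^5 + (1)*t^6) * ha2 + ((16)*z*c^2 + (-8)*z*t^2*c^2 + (1)*z*t^4*c^2) * hb2 + ((16)*z*t + (-8)*z*t^3 + (1)*z*t^5) * hc2
  have hxv : xPer = a*(2-t)/((2+t)*b*c) := by
    rw [hxPer, hx2eq]
    exact Real.sqrt_sq (by positivity)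
  have e1 : (1 - t/2) ^ ((3:ℝ)/4) = s*r := by
    rw [← hs2, ← Real.rpow_natCast s 2, ← Real.rpow_mul hs0.le]
    norm_num
    rw [show ((3:ℝ)/2) = 1 + 1/2 by norm_num, Real.rpow_add hs0, Real.rpow_one,
      ← Real.sqrt_eq_rpow]
  have e2 : (1 - t/4) ^ (-(1:ℝ)/2) = q⁻¹ := by
    rw [show (-(1:ℝ)/2) = -(1/2) by norm_num, Real.rpow_neg (by linarith),
      ← Real.sqrt_eq_rpow, hqdef]
  have e3 : (1 + t/2) ^ (-(4:ℝ)) = ((1+t/2)^4)⁻¹ := by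
    rw [show (-(4:ℝ)) = -((4:ℕ):ℝ) by simp, Real.rpow_neg (by linarith), Real.rpow_natCast]
  rw [hmC, hxv, e1, e2, e3]
  have h1pt : (0:ℝ) < 1 + t/2 := by linarith
  field_simp
  rw [← hab, hcq]
  have h4q : 4 - t = 4*q^2 := by linear_combination -4*hq2
  rw [h4q]
  have hr8 : r^8 = s^4 := by linear_combination (r^6 + r^4*s + r^2*s^2 + s^3)*hr2
  have hs4 : 4*s^4 = (2-t)^2 := by linear_combination (4*s^2 + 4*(1-t/2))*hs2
  linear_combination (-1024*z*s*a^7*q^7)*hr8 + (-256*t*a^7*q^7)*hs4 + (-1024*a^7*q^7*s^4)*hzs
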